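/- Let d ≥ 1. There exist constants ε > 0 and c > 0 such that for every d×d Hermitian matrix H with Tr(H) = 0 and operator norm ‖H‖ ≤ ε, the fidelity cost satisfies 1 − |Tr(exp(iH))|²/d² ≥ c · Tr(H²). (This is the quadratic lower bound on the cost function Δ(1, U) = 1 − |Tr(U)|²/d² near the identity of SU(d), needed to deduce the N^{−2} lower bound on the risk from the Van Trees–type Cramér–Rao argument.) -/

import Mathlib

open scoped Matrix.Norms.L2Operator ComplexOrder

set_option maxHeartbeats 1000000

section Aux
variable {d : ℕ}

lemma euclid_coord_le (y : EuclideanSpace ℂ (Fin d)) (i : Fin d) : ‖y i‖ ≤ ‖y‖ := by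
  rw [EuclideanSpace.norm_eq]
  calc ‖y i‖ = Real.sqrt (‖y i‖ ^ 2) := (Real.sqrt_sq (norm_nonneg _)).symm
    _ ≤ _ := by
        apply Real.sqrt_le_sqrt
        exact Finset.single_le_sum (fun j _ => sq_nonneg ‖y j‖) (Finset.mem_univ i)

lemma euclid_norm_le_sum (y : EuclideanSpace ℂ (Fin d)) : ‖y‖ ≤ ∑ i, ‖y i‖ := by
  rw [EuclideanSpace.norm_eq]
  calc Real.sqrt (∑ i, ‖y i‖ ^ 2) ≤ Real.sqrt ((∑ i, ‖y i‖) ^ 2) := by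
        apply Real.sqrt_le_sqrt
        exact Finset.sum_sq_le_sq_sum_of_nonneg (fun j _ => norm_nonneg _)
    _ = _ := Real.sqrt_sq (Finset.sum_nonneg fun j _ => norm_nonneg _)

end Aux

section Aux2
variable {d : ℕ}

lemma opNorm_le_of_mulVec (A : Matrix (Fin d) (Fin d) ℂ) {C : ℝ} (hC : 0 ≤ C)
    (h : ∀ x : EuclideanSpace ℂ (Fin d),
      ‖(EuclideanSpace.equiv (Fin d) ℂ).symm (A.mulVec x)‖ ≤ C * ‖x‖) :
    ‖A‖ ≤ C := by
  rw [Matrix.l2_opNorm_def]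
  exact ContinuousLinearMap.opNorm_le_bound _ hC fun x => h x

lemma entry_norm_le (A : Matrix (Fin d) (Fin d) ℂ) (i j : Fin d) : ‖A i j‖ ≤ ‖A‖ := by
  have h := A.l2_opNorm_mulVec (EuclideanSpace.single j (1 : ℂ))
  rw [EuclideanSpace.norm_single, norm_one, mul_one] at h
  refine le_trans ?_ h
  have hy : ((EuclideanSpace.equiv (Fin d) ℂ).symm
      (A.mulVec (EuclideanSpace.single j (1 : ℂ)))) i = A i j := by
    show (A.mulVec (Pi.single j (1 : ℂ))) i = A i j
    simp [Matrix.mulVec_single]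
  calc ‖A i j‖ = ‖((EuclideanSpace.equiv (Fin d) ℂ).symm
        (A.mulVec (EuclideanSpace.single j (1 : ℂ)))) i‖ := by rw [hy]
    _ ≤ _ := euclid_coord_le _ i

lemma abs_trace_le (A : Matrix (Fin d) (Fin d) ℂ) : ‖A.trace‖ ≤ d * ‖A‖ := by
  rw [Matrix.trace]
  calc ‖∑ i, A.diag i‖ ≤ ∑ i : Fin d, ‖A i i‖ := by
        simpa [Matrix.diag] using
          norm_sum_le (Finset.univ : Finset (Fin d)) (fun i => A i i)
    _ ≤ ∑ i : Fin d, ‖A‖ := Finset.sum_le_sum fun i _ => entry_norm_le A i i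
    _ = d * ‖A‖ := by simp [Finset.sum_const]

lemma opNorm_le_sum_entries (A : Matrix (Fin d) (Fin d) ℂ) :
    ‖A‖ ≤ ∑ i, ∑ j, ‖A i j‖ := by
  refine opNorm_le_of_mulVec A (Finset.sum_nonneg fun i _ =>
    Finset.sum_nonneg fun j _ => norm_nonneg _) fun x => ?_
  calc ‖(EuclideanSpace.equiv (Fin d) ℂ).symm (A.mulVec x)‖
      ≤ ∑ i, ‖((EuclideanSpace.equiv (Fin d) ℂ).symm (A.mulVec x)) i‖ := euclid_norm_le_sum _
    _ ≤ ∑ i, ∑ j, ‖A i j‖ * ‖x‖ := by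
        refine Finset.sum_le_sum fun i _ => ?_
        show ‖(A.mulVec x) i‖ ≤ _
        calc ‖∑ j, A i j * x j‖ ≤ ∑ j, ‖A i j * x j‖ := norm_sum_le _ _
          _ ≤ ∑ j, ‖A i j‖ * ‖x‖ := by
              refine Finset.sum_le_sum fun j _ => ?_
              rw [norm_mul]
              exact mul_le_mul_of_nonneg_left (euclid_coord_le x j) (norm_nonneg _)
    _ = (∑ i, ∑ j, ‖A i j‖) * ‖x‖ := by rw [Finset.sum_mul]; simp [Finset.sum_mul]

end Aux2

section Tail
open Nat
variable {d : ℕ}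

lemma sum_inv_factorial_eq : ∑' n : ℕ, ((n ! : ℝ))⁻¹ = Real.exp 1 := by
  rw [Real.exp_eq_exp_ℝ, NormedSpace.exp_eq_tsum_div]
  simp [one_div]

lemma summable_inv_factorial : Summable (fun n : ℕ => ((n ! : ℝ))⁻¹) := by
  simpa [one_div] using Real.summable_pow_div_factorial 1

lemma exp_tail_bound (M : Matrix (Fin d) (Fin d) ℂ) (hM : ‖M‖ ≤ 1) :
    ‖NormedSpace.exp M - (1 + M + (2 : ℂ)⁻¹ • M ^ 2)‖ ≤ 3 * ‖M‖ ^ 3 := by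
  set f : ℕ → Matrix (Fin d) (Fin d) ℂ := fun n => ((n ! : ℂ))⁻¹ • M ^ n with hf
  have hsum : Summable f := NormedSpace.expSeries_summable' M
  have heq : (∑ i ∈ Finset.range 3, f i) + ∑' i, f (i + 3) = ∑' i, f i :=
    Summable.sum_add_tsum_nat_add 3 hsum
  have hexp : NormedSpace.exp M = ∑' n, f n := by
    rw [NormedSpace.exp_eq_tsum ℂ]
  have hsum3 : (∑ i ∈ Finset.range 3, f i) = 1 + M + (2 : ℂ)⁻¹ • M ^ 2 := by
    rw [Finset.sum_range_succ, Finset.sum_range_succ, Finset.sum_range_succ,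
      Finset.sum_range_zero]
    simp [hf, Nat.factorial]
  have hdiff : NormedSpace.exp M - (1 + M + (2 : ℂ)⁻¹ • M ^ 2) = ∑' i, f (i + 3) := by
    rw [hexp, ← heq, hsum3]; exact add_sub_cancel_left _ _
  rw [hdiff]
  have hterm : ∀ i : ℕ, ‖f (i + 3)‖ ≤ ‖M‖ ^ 3 * ((i ! : ℝ))⁻¹ := by
    intro i
    have h1 : ‖f (i + 3)‖ = (((i + 3)! : ℝ))⁻¹ * ‖M ^ (i + 3)‖ := by
      rw [hf]; rw [norm_smul]; norm_num
    have h2 : ‖M ^ (i + 3)‖ ≤ ‖M‖ ^ (i + 3) := norm_pow_le' M (by omega)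
    have h3 : ‖M‖ ^ (i + 3) ≤ ‖M‖ ^ 3 := by
      rw [pow_add]
      calc ‖M‖ ^ i * ‖M‖ ^ 3 ≤ 1 * ‖M‖ ^ 3 := by
            apply mul_le_mul_of_nonneg_right _ (by positivity)
            exact pow_le_one₀ (norm_nonneg M) hM
        _ = ‖M‖ ^ 3 := one_mul _
    have h4 : (((i + 3)! : ℝ))⁻¹ ≤ ((i ! : ℝ))⁻¹ := by
      apply inv_anti₀ (by positivity)
      exact_mod_cast Nat.factorial_le (by omega)
    calc ‖f (i + 3)‖ = (((i + 3)! : ℝ))⁻¹ * ‖M ^ (i + 3)‖ := h1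
      _ ≤ ((i ! : ℝ))⁻¹ * ‖M‖ ^ 3 := by
          apply mul_le_mul h4 (h2.trans h3) (norm_nonneg _) (by positivity)
      _ = ‖M‖ ^ 3 * ((i ! : ℝ))⁻¹ := mul_comm _ _
  have hg : Summable (fun i : ℕ => ‖M‖ ^ 3 * ((i ! : ℝ))⁻¹) :=
    summable_inv_factorial.mul_left _
  calc ‖∑' i, f (i + 3)‖ ≤ ∑' i, (‖M‖ ^ 3 * ((i ! : ℝ))⁻¹) :=
        tsum_of_norm_bounded hg.hasSum hterm
    _ = ‖M‖ ^ 3 * Real.exp 1 := by rw [tsum_mul_left, sum_inv_factorial_eq]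
    _ ≤ ‖M‖ ^ 3 * 3 := by
        apply mul_le_mul_of_nonneg_left _ (by positivity)
        exact (Real.exp_one_lt_d9.le.trans (by norm_num))
    _ = 3 * ‖M‖ ^ 3 := mul_comm _ _

end Tail


/-- there are `ε > 0` and `c > 0` such that for every `d×d` Hermitian matrix `H`
with `Tr H = 0` and operator norm `‖H‖ ≤ ε`, the fidelity cost satisfies
`1 - |Tr(exp(iH))|²/d² ≥ c · Tr(H²)`.  (The norm is the `ℓ²` operator norm on matrices;
`Tr(H²)` is real since `H` is Hermitian, and we take its real part.) -/
theorem stmt18 (d : ℕ) (hd : 1 ≤ d) :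
    ∃ ε : ℝ, 0 < ε ∧ ∃ c : ℝ, 0 < c ∧
      ∀ H : Matrix (Fin d) (Fin d) ℂ, H.IsHermitian → H.trace = 0 → ‖H‖ ≤ ε →
        c * ((H ^ 2).trace).re
          ≤ 1 - ‖(NormedSpace.exp (Complex.I • H)).trace‖ ^ 2 / (d : ℝ) ^ 2 := by
  have hd' : (0:ℝ) < (d:ℝ) := by exact_mod_cast hd
  have hd1 : (1:ℝ) ≤ (d:ℝ) := by exact_mod_cast hd
  refine ⟨1/(12*(d:ℝ)^3), by positivity, 1/(4*(d:ℝ)), by positivity, ?_⟩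
  intro H hH htr hnorm
  have hεle1 : 1/(12*(d:ℝ)^3) ≤ 1 := by
    rw [div_le_one (by positivity)]
    have : (1:ℝ) ≤ (d:ℝ)^3 := one_le_pow₀ hd1
    linarith
  have hH1 : ‖H‖ ≤ 1 := hnorm.trans hεle1
  -- conjugate symmetry of entries
  have hconj : ∀ i j, H j i = (starRingEnd ℂ) (H i j) := by
    intro i j
    conv_lhs => rw [← hH]
    simp [Matrix.conjTranspose_apply]
  -- the trace of H^2 is the (real) sum of |H i j|^2
  have key : (H ^ 2).trace = ((∑ i, ∑ j, Complex.normSq (H i j) : ℝ) : ℂ) := by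
    rw [Matrix.trace]
    calc ∑ i, (H ^ 2).diag i = ∑ i, ∑ j, H i j * H j i := by
          simp [Matrix.diag, pow_two, Matrix.mul_apply]
      _ = ∑ i, ∑ j, (Complex.normSq (H i j) : ℂ) := by
          refine Finset.sum_congr rfl fun i _ => Finset.sum_congr rfl fun j _ => ?_
          rw [hconj i j, Complex.mul_conj]
      _ = _ := by norm_cast
  set t : ℝ := ((H ^ 2).trace).re with ht
  have htval : t = ∑ i, ∑ j, Complex.normSq (H i j) := by
    rw [ht, key, Complex.ofReal_re]
  have ht0 : 0 ≤ t := by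
    rw [htval]
    exact Finset.sum_nonneg fun i _ => Finset.sum_nonneg fun j _ => Complex.normSq_nonneg _
  have keyC : (H ^ 2).trace = ((t : ℝ) : ℂ) := by rw [htval]; exact key
  -- upper bound  t ≤ d * ‖H‖^2
  have htd : t ≤ (d:ℝ) * ‖H‖ ^ 2 := by
    calc t ≤ ‖(H ^ 2).trace‖ := Complex.re_le_norm _
      _ ≤ (d:ℝ) * ‖H ^ 2‖ := abs_trace_le _
      _ ≤ (d:ℝ) * ‖H‖ ^ 2 := by
          have := Matrix.l2_opNorm_mul H H
          rw [pow_two, pow_two]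
          nlinarith [this, hd']
  have htled : t ≤ (d:ℝ) := by
    have h : ‖H‖ ^ 2 ≤ 1 := by nlinarith [hH1, norm_nonneg H]
    nlinarith [htd, h, hd']
  -- lower bound  ‖H‖^2 ≤ d^2 * t
  have hHt : ‖H‖ ^ 2 ≤ (d:ℝ)^2 * t := by
    have h1 : ‖H‖ ≤ ∑ p : Fin d × Fin d, ‖H p.1 p.2‖ := by
      rw [Fintype.sum_prod_type]
      exact opNorm_le_sum_entries H
    have h2 : (∑ p : Fin d × Fin d, ‖H p.1 p.2‖) ^ 2
        ≤ (∑ p : Fin d × Fin d, (1:ℝ) ^ 2) * ∑ p : Fin d × Fin d, ‖H p.1 p.2‖ ^ 2 := by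
      simpa using Finset.sum_mul_sq_le_sq_mul_sq Finset.univ (fun _ => (1:ℝ))
        (fun p : Fin d × Fin d => ‖H p.1 p.2‖)
    have h3 : (∑ p : Fin d × Fin d, (1:ℝ) ^ 2) = (d:ℝ)^2 := by
      simp [Finset.card_univ, pow_two]
    have h4 : (∑ p : Fin d × Fin d, ‖H p.1 p.2‖ ^ 2) = t := by
      rw [htval, Fintype.sum_prod_type]
      refine Finset.sum_congr rfl fun i _ => Finset.sum_congr rfl fun j _ => ?_
      rw [← Complex.sq_norm]
    calc ‖H‖ ^ 2 ≤ (∑ p : Fin d × Fin d, ‖H p.1 p.2‖) ^ 2 :=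
          pow_le_pow_left₀ (norm_nonneg _) h1 2
      _ ≤ _ := by rw [← h3, ← h4]; exact h2
  -- the exponential and its quadratic approximation
  set M : Matrix (Fin d) (Fin d) ℂ := Complex.I • H with hM
  have hMn : ‖M‖ = ‖H‖ := by rw [hM, norm_smul, Complex.norm_I, one_mul]
  set P : Matrix (Fin d) (Fin d) ℂ := 1 + M + (2 : ℂ)⁻¹ • M ^ 2 with hP
  have htail : ‖NormedSpace.exp M - P‖ ≤ 3 * ‖H‖ ^ 3 := by
    rw [← hMn]
    exact exp_tail_bound M (by rw [hMn]; exact hH1)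
  have hM2 : M ^ 2 = -(H ^ 2) := by
    rw [hM, smul_pow, Complex.I_sq, neg_smul, one_smul]
  have hPtr : P.trace = ((((d:ℝ) - t/2 : ℝ)) : ℂ) := by
    rw [hP, Matrix.trace_add, Matrix.trace_add, Matrix.trace_one, Matrix.trace_smul,
      hM, Matrix.trace_smul, htr, hM2, Matrix.trace_neg, keyC]
    push_cast
    simp [Fintype.card_fin]
    ring
  -- the remainder in the trace
  have hz : ‖(NormedSpace.exp M).trace - P.trace‖ ≤ (d:ℝ) * (3 * ‖H‖ ^ 3) := by
    rw [← Matrix.trace_sub]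
    calc ‖(NormedSpace.exp M - P).trace‖
        ≤ (d:ℝ) * ‖NormedSpace.exp M - P‖ := abs_trace_le _
      _ ≤ _ := by nlinarith [htail, hd']
  have hz4 : ‖(NormedSpace.exp M).trace - P.trace‖ ≤ t/4 := by
    have h5 : ‖H‖ ^ 3 ≤ (1/(12*(d:ℝ)^3)) * ((d:ℝ)^2 * t) := by
      calc ‖H‖ ^ 3 = ‖H‖ * ‖H‖ ^ 2 := by ring
        _ ≤ (1/(12*(d:ℝ)^3)) * ((d:ℝ)^2 * t) := by
            apply mul_le_mul hnorm hHt (by positivity) (by positivity)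
    calc ‖(NormedSpace.exp M).trace - P.trace‖
        ≤ (d:ℝ) * (3 * ‖H‖ ^ 3) := hz
      _ ≤ (d:ℝ) * (3 * ((1/(12*(d:ℝ)^3)) * ((d:ℝ)^2 * t))) := by
          nlinarith [h5, hd']
      _ = t/4 := by field_simp; ring
  -- assemble
  set a : ℝ := ‖(NormedSpace.exp M).trace‖ with ha
  have habs : a ≤ (d:ℝ) - t/4 := by
    have h6 : ‖P.trace‖ = (d:ℝ) - t/2 := by
      rw [hPtr, Complex.norm_real, Real.norm_eq_abs, abs_of_nonneg (by linarith)]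
    calc a = ‖P.trace + ((NormedSpace.exp M).trace - P.trace)‖ := by
          rw [ha]; congr 1; ring
      _ ≤ ‖P.trace‖ + ‖(NormedSpace.exp M).trace - P.trace‖ :=
          norm_add_le _ _
      _ ≤ ((d:ℝ) - t/2) + t/4 := by rw [h6]; linarith [hz4]
      _ = (d:ℝ) - t/4 := by ring
  have ha0 : 0 ≤ a := norm_nonneg _
  have hfin : a ^ 2 ≤ (d:ℝ)^2 - (d:ℝ) * t / 4 := by
    have h7 : a ^ 2 ≤ ((d:ℝ) - t/4) ^ 2 := by
      apply pow_le_pow_left₀ ha0 habs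
    nlinarith [ht0, htled, hd']
  have hd2 : (0:ℝ) < (d:ℝ)^2 := by positivity
  have key2 : a^2 / (d:ℝ)^2 ≤ 1 - 1/(4*(d:ℝ)) * t := by
    rw [div_le_iff₀ hd2]
    have e : 1/(4*(d:ℝ)) * ((d:ℝ))^2 = (d:ℝ)/4 := by field_simp
    nlinarith [hfin, e, ht0, hd']
  linarith [key2]
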